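/- arXiv:1504.01403 — 3 statements merged into one kernel-verified Lean document; each statement's English description precedes it below -/
import Mathlib

section
/- Let G₁ = ⊔_{i=1}^r G_{1i} and G₂ = ⊔_{i=1}^s G_{2i} be finite simple graphs on disjoint vertex sets V₁ = ∪ V_{1i} and V₂ = ∪ V_{2i}, where the G_{1i} and G_{2i} are the connected components and r, s ≥ 2. Let G = G₁ * G₂. If T is a nonempty subset of V₁ ∪ V₂ such that every j ∈ T is a cut point of the induced subgraph of G on ((V₁ ∪ V₂) ∖ T) ∪ {j}, then V₁ ⊆ T or V₂ ⊆ T. -/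
open SimpleGraph

/-- The join `G₁ * G₂` of two graphs on disjoint vertex sets: all edges of `G₁`,
all edges of `G₂`, and all pairs between the two vertex sets. -/
def join {V₁ V₂ : Type*} (G₁ : SimpleGraph V₁) (G₂ : SimpleGraph V₂) :
    SimpleGraph (V₁ ⊕ V₂) where
  Adj x y :=
    match x, y with
    | .inl a, .inl b => G₁.Adj a b
    | .inr a, .inr b => G₂.Adj a b
    | .inl _, .inr _ => True
    | .inr _, .inl _ => True
  symm := ⟨by rintro (a|a) (b|b) h <;> first | exact h.symm | trivial⟩
  loopless := ⟨by rintro (a|a) h <;> exact h.ne rfl⟩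

/-- The number of connected components of the induced subgraph of `G` on `s`. -/
noncomputable def numComp {V : Type*} (G : SimpleGraph V) (s : Set V) : ℕ :=
  Nat.card (G.induce s).ConnectedComponent

/-- `T` has the cut point property for `G`: `T` is nonempty and every `i ∈ T` is a
cut point of the induced subgraph of `G` on `(V ∖ T) ∪ {i}`, i.e. removing `i` from
that induced subgraph strictly increases the number of connected components. -/
lemma join_induce_connected {V₁ V₂ : Type*} (G₁ : SimpleGraph V₁) (G₂ : SimpleGraph V₂)
    (S : Set (V₁ ⊕ V₂)) (a : V₁) (b : V₂) (ha : Sum.inl a ∈ S) (hb : Sum.inr b ∈ S) :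
    ((join G₁ G₂).induce S).Connected := by
  rw [SimpleGraph.connected_iff]
  refine ⟨?_, ⟨⟨Sum.inl a, ha⟩⟩⟩
  have key : ∀ x : S, ((join G₁ G₂).induce S).Reachable x ⟨Sum.inr b, hb⟩ := by
    rintro ⟨(u | u), hu⟩
    · exact SimpleGraph.Adj.reachable trivial
    · refine SimpleGraph.Reachable.trans (SimpleGraph.Adj.reachable
        (v := (⟨Sum.inl a, ha⟩ : S)) trivial) (SimpleGraph.Adj.reachable trivial)
  intro x y
  exact (key x).trans (key y).symm

lemma numComp_eq_one {V : Type*} (G : SimpleGraph V) (s : Set V)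
    (h : (G.induce s).Connected) : numComp G s = 1 := by
  have hsub : Subsingleton (G.induce s).ConnectedComponent := by
    constructor
    intro c d
    refine ConnectedComponent.ind₂ (fun u v => ?_) c d
    exact ConnectedComponent.sound (h.preconnected u v)
  have hne : Nonempty (G.induce s).ConnectedComponent := ⟨(G.induce s).connectedComponentMk
    (Classical.choice h.nonempty)⟩
  unfold numComp
  exact Nat.card_eq_one_iff_unique.mpr ⟨hsub, hne⟩

def HasCutPointProperty {V : Type*} (G : SimpleGraph V) (T : Set V) : Prop :=
  T.Nonempty ∧ ∀ i ∈ T, numComp G (Tᶜ ∪ {i}) < numComp G Tᶜ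

theorem stmt11 {V₁ V₂ : Type*} [Fintype V₁] [Fintype V₂] [Nonempty V₁] [Nonempty V₂]
    (G₁ : SimpleGraph V₁) (G₂ : SimpleGraph V₂)
    (h1 : ¬ G₁.Connected) (h2 : ¬ G₂.Connected)
    (T : Set (V₁ ⊕ V₂)) (hT : T.Nonempty)
    (hcut : ∀ j ∈ T,
      numComp (join G₁ G₂) (Tᶜ ∪ {j}) < numComp (join G₁ G₂) Tᶜ) :
    Set.range Sum.inl ⊆ T ∨ Set.range Sum.inr ⊆ T := by
  by_contra hcon
  push_neg at hcon
  obtain ⟨h1', h2'⟩ := hcon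
  obtain ⟨x1, ⟨a, rfl⟩, ha⟩ := Set.not_subset.mp h1'
  obtain ⟨x2, ⟨b, rfl⟩, hb⟩ := Set.not_subset.mp h2'
  obtain ⟨j, hj⟩ := hT
  have h1 : numComp (join G₁ G₂) Tᶜ = 1 :=
    numComp_eq_one _ _ (join_induce_connected G₁ G₂ _ a b ha hb)
  have h2 : numComp (join G₁ G₂) (Tᶜ ∪ {j}) = 1 :=
    numComp_eq_one _ _ (join_induce_connected G₁ G₂ _ a b (Or.inl ha) (Or.inl hb))
  have := hcut j hj
  omega
end

section
/- Let G be a finite simple graph, v a simplicial vertex of G with neighbors v₁, …, v_t (t ≥ 2), let e = {v, v_t}, and set H = (G ∖ e)_e. Then v is an isolated vertex of the induced subgraph of H on V(G) ∖ {v₁, …, v_{t−1}}, i.e., every neighbor of v in H lies in {v₁, …, v_{t−1}}. -/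
open SimpleGraph

/-- For a graph `K` and a pair `{a, b}`, the graph `K_e` on the same vertex set whose
edges are those of `K` together with all pairs `{x, y}` with `x, y ∈ N_K(a)` or
`x, y ∈ N_K(b)`. -/
def extGraph {V : Type*} (K : SimpleGraph V) (a b : V) : SimpleGraph V :=
  K ⊔ SimpleGraph.fromRel (fun x y => (K.Adj a x ∧ K.Adj a y) ∨ (K.Adj b x ∧ K.Adj b y))

theorem stmt17 {V : Type*} [Fintype V] (G : SimpleGraph V) (v : V) (t : ℕ) (ht : 2 ≤ t)
    (w : Fin t → V) (hinj : Function.Injective w)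
    (hN : G.neighborSet v = Set.range w)
    (hsimp : G.IsClique (G.neighborSet v)) :
    ∀ x : V,
      (extGraph (G.deleteEdges {s(v, w ⟨t - 1, by omega⟩)}) v (w ⟨t - 1, by omega⟩)).Adj v x →
        ∃ i : Fin t, (i : ℕ) < t - 1 ∧ x = w i := by
  intro x hx
  set b := w ⟨t - 1, by omega⟩ with hb
  set K := G.deleteEdges {s(v, b)} with hK
  have hKvb : ¬ K.Adj v b := by
    simp [hK, SimpleGraph.deleteEdges_adj]
  have hKbv : ¬ K.Adj b v := fun h => hKvb h.symm
  have hKadj : K.Adj v x := by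
    rcases hx with h | h
    · exact h
    · rcases h with ⟨hne, h | h⟩
      · rcases h with ⟨h, _⟩ | ⟨h, _⟩
        · exact absurd h (K.loopless.irrefl v)
        · exact absurd h hKbv
      · rcases h with ⟨_, h⟩ | ⟨_, h⟩
        · exact absurd h (K.loopless.irrefl v)
        · exact absurd h.symm hKvb
  have hGadj : G.Adj v x := hKadj.1
  have hvb : v ≠ b := by
    have : G.Adj v b := by
      have : b ∈ G.neighborSet v := by rw [hN]; exact ⟨_, rfl⟩
      exact this
    exact this.ne
  have hxb : x ≠ b := by
    intro h
    exact hKadj.2 (by rw [h]; simp [hvb])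
  have : x ∈ G.neighborSet v := hGadj
  rw [hN] at this
  obtain ⟨i, hi⟩ := this
  refine ⟨i, ?_, hi.symm⟩
  by_contra hlt
  have : (i : ℕ) = t - 1 := by omega
  exact hxb (by rw [← hi, hb]; congr 1; exact Fin.ext this)
end

section
/- Let G be a finite simple graph in which every vertex has degree at least 2, and suppose G ∖ v is the disjoint union of two path graphs P_t and P_s on disjoint vertex sets with t, s ≥ 3, where v is adjacent in G to all four endpoints of P_t and P_s. If moreover no neighbor of an endpoint of P_t within P_t is adjacent to v, then there exists a vertex u of G with α_G(u) = 1 while α_G(v) ≥ 6. -/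
open SimpleGraph

/-- `H` is a path graph: its vertices can be enumerated `u₀, …, u_{n-1}` so that the
edges are exactly the pairs of consecutive vertices. -/
def IsPathGraph {W : Type*} (H : SimpleGraph W) : Prop :=
  ∃ (n : ℕ) (e : Fin n ≃ W), ∀ a b : Fin n,
    H.Adj (e a) (e b) ↔ ((a : ℕ) + 1 = (b : ℕ) ∨ (b : ℕ) + 1 = (a : ℕ))

/-- An endpoint of a path graph: a vertex with at most one neighbour. -/
def IsEndpoint {W : Type*} (H : SimpleGraph W) (x : W) : Prop :=
  (H.neighborSet x).Subsingleton

/-- `α_G(v) = C(deg_G(v), 2) − |E(G_{N_G(v)})|`, as an integer. -/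
noncomputable def alphaG {V : Type*} (G : SimpleGraph V) (v : V) : ℤ :=
  ((Nat.card (G.neighborSet v)).choose 2 : ℤ) -
    (Nat.card (G.induce (G.neighborSet v)).edgeSet : ℤ)

private lemma endpoint_aux {W : Type*} (H : SimpleGraph W) (n : ℕ) (e : Fin n ≃ W)
    (he : ∀ a b : Fin n, H.Adj (e a) (e b) ↔ ((a:ℕ)+1 = (b:ℕ) ∨ (b:ℕ)+1 = (a:ℕ)))
    (i : Fin n) (hi : (i : ℕ) = 0 ∨ (i : ℕ) + 1 = n) : IsEndpoint H (e i) := by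
  intro w hw w' hw'
  have h1 := (he i (e.symm w)).mp (by simpa using hw)
  have h2 := (he i (e.symm w')).mp (by simpa using hw')
  have h3 : e.symm w = e.symm w' := by
    have hb := (e.symm w).isLt
    have hb' := (e.symm w').isLt
    exact Fin.ext (by omega)
  simpa using congrArg e h3

private lemma card_add_card_compl {W : Type*} [Fintype W] (H : SimpleGraph W) :
    Nat.card H.edgeSet + Nat.card Hᶜ.edgeSet = (Fintype.card W).choose 2 := by
  classical
  have hunion : H.edgeFinset ∪ Hᶜ.edgeFinset = (⊤ : SimpleGraph W).edgeFinset := by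
    ext p
    induction p using Sym2.ind with
    | _ x y =>
      simp only [Finset.mem_union, mem_edgeFinset, mem_edgeSet, compl_adj, top_adj]
      constructor
      · rintro (h | h)
        · exact h.ne
        · exact h.1
      · intro h
        by_cases hadj : H.Adj x y
        · exact Or.inl hadj
        · exact Or.inr ⟨h, hadj⟩
  have hd : Disjoint H.edgeFinset Hᶜ.edgeFinset := by
    rw [Finset.disjoint_left]
    intro p hp hp'
    induction p using Sym2.ind with
    | _ x y =>
      rw [mem_edgeFinset, mem_edgeSet] at hp hp'
      exact hp'.2 hp
  rw [Nat.card_eq_fintype_card, Nat.card_eq_fintype_card, ← edgeFinset_card, ← edgeFinset_card,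
    ← Finset.card_union_of_disjoint hd, hunion, card_edgeFinset_top_eq_card_choose_two]

theorem stmt18 {V : Type*} [Fintype V] (G : SimpleGraph V) (v : V)
    (hdeg : ∀ x : V, 2 ≤ Nat.card (G.neighborSet x))
    (A B : Set V) (hAB : A ∪ B = ({v}ᶜ : Set V)) (hdisj : Disjoint A B)
    (hA : IsPathGraph (G.induce A)) (hB : IsPathGraph (G.induce B))
    (hcross : ∀ a ∈ A, ∀ b ∈ B, ¬ G.Adj a b)
    (hcardA : 3 ≤ Nat.card A) (hcardB : 3 ≤ Nat.card B)
    (hendA : ∀ x : A, IsEndpoint (G.induce A) x → G.Adj v x)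
    (hendB : ∀ x : B, IsEndpoint (G.induce B) x → G.Adj v x)
    (hnbr : ∀ x y : A, IsEndpoint (G.induce A) x → (G.induce A).Adj x y → ¬ G.Adj v y) :
    ∃ u : V, alphaG G u = 1 ∧ 6 ≤ alphaG G v := by
  classical
  obtain ⟨n, e, he⟩ := hA
  obtain ⟨m, f, hf⟩ := hB
  have hnA : Nat.card A = n := by
    rw [Nat.card_congr e.symm, Nat.card_eq_fintype_card, Fintype.card_fin]
  have hmB : Nat.card B = m := by
    rw [Nat.card_congr f.symm, Nat.card_eq_fintype_card, Fintype.card_fin]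
  have hn : 3 ≤ n := hnA ▸ hcardA
  have hm : 3 ≤ m := hmB ▸ hcardB
  -- indices
  set a0 : A := e ⟨0, by omega⟩ with ha0
  set a1 : A := e ⟨1, by omega⟩ with ha1
  set a2 : A := e ⟨2, by omega⟩ with ha2
  set aL : A := e ⟨n-1, by omega⟩ with haL
  set b0 : B := f ⟨0, by omega⟩ with hb0
  set bL : B := f ⟨m-1, by omega⟩ with hbL
  have hepa0 : IsEndpoint (G.induce A) a0 := endpoint_aux _ n e he _ (Or.inl rfl)
  have hepaL : IsEndpoint (G.induce A) aL := endpoint_aux _ n e he _ (Or.inr (by simp; omega))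
  have hepb0 : IsEndpoint (G.induce B) b0 := endpoint_aux _ m f hf _ (Or.inl rfl)
  have hepbL : IsEndpoint (G.induce B) bL := endpoint_aux _ m f hf _ (Or.inr (by simp; omega))
  -- adjacency inside A transfers
  have hadjA : ∀ p q : A, G.Adj ↑p ↑q ↔
      ((e.symm p : ℕ) + 1 = (e.symm q : ℕ) ∨ (e.symm q : ℕ) + 1 = (e.symm p : ℕ)) := by
    intro p q
    have := he (e.symm p) (e.symm q)
    simpa using this
  have hadjB : ∀ p q : B, G.Adj ↑p ↑q ↔
      ((f.symm p : ℕ) + 1 = (f.symm q : ℕ) ∨ (f.symm q : ℕ) + 1 = (f.symm p : ℕ)) := by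
    intro p q
    have := hf (f.symm p) (f.symm q)
    simpa using this
  -- Part 1: u := a1
  have hadj01 : (G.induce A).Adj a0 a1 := by
    rw [he]; simp
  have hva1 : ¬ G.Adj v ↑a1 := hnbr a0 a1 hepa0 hadj01
  have hNu : G.neighborSet (↑a1 : V) = {(↑a0 : V), (↑a2 : V)} := by
    ext w
    simp only [mem_neighborSet, Set.mem_insert_iff, Set.mem_singleton_iff]
    constructor
    · intro hw
      have hwv : w ≠ v := by
        rintro rfl
        exact hva1 hw.symm
      have hwAB : w ∈ A ∪ B := by rw [hAB]; exact hwv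
      rcases hwAB with hwA | hwB
      · have := (hadjA a1 ⟨w, hwA⟩).mp hw
        simp only [ha1, Equiv.symm_apply_apply] at this
        rcases this with h | h
        · right
          have : e.symm ⟨w, hwA⟩ = ⟨2, by omega⟩ := Fin.ext (by simpa using h.symm)
          have := congrArg e this
          simp only [Equiv.apply_symm_apply] at this
          exact congrArg Subtype.val this
        · left
          have : e.symm ⟨w, hwA⟩ = ⟨0, by omega⟩ := Fin.ext (by simpa using h)
          have := congrArg e this
          simp only [Equiv.apply_symm_apply] at this
          exact congrArg Subtype.val this
      · exact absurd hw (hcross _ a1.2 w hwB)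
    · rintro (rfl | rfl)
      · exact (hadjA a1 a0).mpr (by simp [ha0, ha1])
      · exact (hadjA a1 a2).mpr (by simp [ha1, ha2])
  have ha0a2 : (↑a0 : V) ≠ ↑a2 := by
    intro h
    have : a0 = a2 := Subtype.ext h
    have := congrArg e.symm this
    simp [ha0, ha2] at this
  have hcard2 : Nat.card (G.neighborSet (↑a1 : V)) = 2 := by
    rw [hNu, Nat.card_coe_set_eq, Set.ncard_pair ha0a2]
  have hE0 : (G.induce (G.neighborSet (↑a1 : V))).edgeSet = ∅ := by
    rw [Set.eq_empty_iff_forall_notMem]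
    intro p hp
    induction p using Sym2.ind with
    | _ x y =>
      rw [mem_edgeSet] at hp
      have hx := (Set.ext_iff.mp hNu ↑x).mp x.2
      have hy := (Set.ext_iff.mp hNu ↑y).mp y.2
      simp only [Set.mem_insert_iff, Set.mem_singleton_iff] at hx hy
      have hadj : G.Adj ↑x ↑y := hp
      rcases hx with hx | hx <;> rcases hy with hy | hy
      · exact hadj.ne (hx.trans hy.symm)
      · -- a0 adjacent a2 : impossible
        rw [hx, hy] at hadj
        have := (hadjA a0 a2).mp hadj
        simp [ha0, ha2] at this
      · rw [hx, hy] at hadj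
        have := (hadjA a2 a0).mp hadj
        simp [ha0, ha2] at this
      · exact hadj.ne (hx.trans hy.symm)
  refine ⟨↑a1, ?_, ?_⟩
  · unfold alphaG
    rw [hcard2, hE0]
    simp
  -- Part 2
  · -- endpoints are neighbors of v
    have hva0 : (↑a0 : V) ∈ G.neighborSet v := hendA a0 hepa0
    have hvaL : (↑aL : V) ∈ G.neighborSet v := hendA aL hepaL
    have hvb0 : (↑b0 : V) ∈ G.neighborSet v := hendB b0 hepb0
    have hvbL : (↑bL : V) ∈ G.neighborSet v := hendB bL hepbL
    set N := G.neighborSet v with hN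
    have : Fintype N := Fintype.ofFinite _
    set H := G.induce N with hH
    -- four vertices in N
    set P : Fin 4 → N := ![⟨↑a0, hva0⟩, ⟨↑aL, hvaL⟩, ⟨↑b0, hvb0⟩, ⟨↑bL, hvbL⟩] with hP
    have haaL : (↑a0 : V) ≠ ↑aL := by
      intro h
      have : a0 = aL := Subtype.ext h
      have := congrArg e.symm this
      simp [ha0, haL] at this
      omega
    have hbbL : (↑b0 : V) ≠ ↑bL := by
      intro h
      have : b0 = bL := Subtype.ext h
      have := congrArg f.symm this
      simp [hb0, hbL] at this
      omega
    have hABne : ∀ (p : A) (q : B), (↑p : V) ≠ ↑q := by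
      intro p q h
      exact (Set.disjoint_left.mp hdisj p.2) (h ▸ q.2)
    have hPne : ∀ i j : Fin 4, i ≠ j → P i ≠ P j := by
      intro i j hij
      fin_cases i <;> fin_cases j <;>
        (try simp only [hP, Fin.zero_eta, Fin.mk_one, show (⟨2, by omega⟩ : Fin 4) = 2 from rfl,
          show (⟨3, by omega⟩ : Fin 4) = 3 from rfl, Matrix.cons_val_zero, Matrix.cons_val_one,
          Matrix.head_cons, Matrix.cons_val_two, Matrix.tail_cons, Matrix.cons_val_three,
          Matrix.head_fin_const, Fin.isValue, Subtype.mk.injEq, ne_eq] at hij ⊢) <;>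
        first
          | exact absurd trivial hij
          | exact haaL
          | exact fun h => haaL h.symm
          | exact hbbL
          | exact fun h => hbbL h.symm
          | exact hABne a0 b0
          | exact hABne a0 bL
          | exact hABne aL b0
          | exact hABne aL bL
          | exact fun h => hABne a0 b0 h.symm
          | exact fun h => hABne a0 bL h.symm
          | exact fun h => hABne aL b0 h.symm
          | exact fun h => hABne aL bL h.symm
    have hPinj : Function.Injective P := by
      intro i j h
      by_contra hij
      exact hPne i j hij h
    -- non-adjacencies
    have hnadjA : ¬ G.Adj ↑a0 ↑aL := by
      rw [hadjA]
      simp [ha0, haL]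
      omega
    have hnadjB : ¬ G.Adj ↑b0 ↑bL := by
      rw [hadjB]
      simp [hb0, hbL]
      omega
    have hnadj : ∀ i j : Fin 4, i ≠ j → ¬ H.Adj (P i) (P j) := by
      intro i j hij
      fin_cases i <;> fin_cases j <;>
        (try simp only [hP, Fin.zero_eta, Fin.mk_one, show (⟨2, by omega⟩ : Fin 4) = 2 from rfl,
          show (⟨3, by omega⟩ : Fin 4) = 3 from rfl, Matrix.cons_val_zero, Matrix.cons_val_one,
          Matrix.head_cons, Matrix.cons_val_two, Matrix.tail_cons, Matrix.cons_val_three,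
          Matrix.head_fin_const, Fin.isValue, ne_eq] at hij ⊢) <;>
        first
          | exact absurd trivial hij
          | exact hnadjA
          | exact fun h => hnadjA (G.adj_symm h)
          | exact hnadjB
          | exact fun h => hnadjB (G.adj_symm h)
          | exact fun h => hcross _ a0.2 _ b0.2 h
          | exact fun h => hcross _ a0.2 _ bL.2 h
          | exact fun h => hcross _ aL.2 _ b0.2 h
          | exact fun h => hcross _ aL.2 _ bL.2 h
          | exact fun h => hcross _ a0.2 _ b0.2 (G.adj_symm h)
          | exact fun h => hcross _ a0.2 _ bL.2 (G.adj_symm h)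
          | exact fun h => hcross _ aL.2 _ b0.2 (G.adj_symm h)
          | exact fun h => hcross _ aL.2 _ bL.2 (G.adj_symm h)
    -- embedding of K4 into Hᶜ
    let emb : (⊤ : SimpleGraph (Fin 4)) ↪g Hᶜ :=
      ⟨⟨P, hPinj⟩, by
        intro a b
        simp only [Function.Embedding.coeFn_mk, compl_adj, top_adj]
        constructor
        · intro h
          exact fun hab => h.1 (by rw [hab])
        · intro h
          exact ⟨fun hPab => h (hPinj hPab), hnadj a b h⟩⟩
    have h6 : 6 ≤ Nat.card Hᶜ.edgeSet := by
      have hinj := (Embedding.mapEdgeSet emb).injective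
      have := Nat.card_le_card_of_injective _ hinj
      have htop : Nat.card (⊤ : SimpleGraph (Fin 4)).edgeSet = 6 := by
        rw [Nat.card_eq_fintype_card, ← edgeFinset_card,
          card_edgeFinset_top_eq_card_choose_two]
        simp only [Fintype.card_fin]
        decide
      omega
    have hsum := card_add_card_compl H
    have hcardN : Nat.card N = Fintype.card N := Nat.card_eq_fintype_card
    unfold alphaG
    rw [← hN, ← hH]
    have h4 : Nat.card H.edgeSet + 6 ≤ (Nat.card N).choose 2 := by
      rw [hcardN, ← hsum]
      omega
    omega
end
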